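/- Under conjunctivity, c ; c^ω ; d = c ; c^* ; d ⊓ c^∞ for all commands c, d. -/
import Mathlib


/-- A Concurrent Refinement Algebra over a complete distributive lattice of
commands, ordered by refinement (`⊓` = nondeterministic choice, `⊥` = abort,
`⊤` = magic), with sequential composition `seq` (identity `nil`),
synchronous parallel `par`, weak conjunction `conj`, a Boolean-style
sub-lattice of atomic steps `Atomic` (with `eps` the environment-step identity
of `par`) and a sub-lattice of tests `Test`. -/
structure CRA (C : Type*) [CompleteDistribLattice C] where
  seq : C → C → C
  par : C → C → C
  conj : C → C → C
  nil : C
  eps : C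
  Atomic : C → Prop
  Test : C → Prop
  seq_assoc : ∀ a b c, seq (seq a b) c = seq a (seq b c)
  seq_nil : ∀ c, seq c nil = c
  nil_seq : ∀ c, seq nil c = c
  seq_mono_left : ∀ d : C, Monotone fun c => seq c d
  seq_mono_right : ∀ c : C, Monotone (seq c)
  top_seq : ∀ c, seq ⊤ c = ⊤
  bot_seq : ∀ c, seq ⊥ c = ⊥
  /-- sequential composition distributes over arbitrary choices on the right -/
  seq_sInf_distrib : ∀ (S : Set C) (d : C), seq (sInf S) d = ⨅ c ∈ S, seq c d
  par_assoc : ∀ a b c, par (par a b) c = par a (par b c)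
  par_comm : ∀ a b, par a b = par b a
  /-- parallel distributes over arbitrary choices -/
  par_sInf_distrib : ∀ (c : C) (S : Set C), par c (sInf S) = ⨅ d ∈ S, par c d
  nil_par_nil : par nil nil = nil
  atomic_par : ∀ a b, Atomic a → Atomic b → Atomic (par a b)
  /-- synchronous interchange law for atomic steps -/
  interchange : ∀ a b c d, Atomic a → Atomic b →
    par (seq a c) (seq b d) = seq (par a b) (par c d)
  par_atomic_seq_nil : ∀ a c, Atomic a → par (seq a c) nil = ⊤
  atomic_eps : Atomic eps
  /-- `eps` is the identity of parallel on atomic steps -/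
  eps_par_atomic : ∀ a, Atomic a → par eps a = a
  conj_assoc : ∀ a b c, conj (conj a b) c = conj a (conj b c)
  conj_comm : ∀ a b, conj a b = conj b a
  conj_idem : ∀ a, conj a a = a
  conj_bot : ∀ c, conj c ⊥ = ⊥
  conj_atomic : ∀ a b, Atomic a → Atomic b → conj a b = a ⊔ b
  conj_test : ∀ t t', Test t → Test t' → conj t t' = t ⊔ t'
  conj_interchange : ∀ a b c d, Atomic a → Atomic b →
    conj (seq a c) (seq b d) = seq (conj a b) (conj c d)
  conj_atomic_seq_nil : ∀ a c, Atomic a → conj (seq a c) nil = ⊤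
  conj_sInf_distrib : ∀ (c : C) (S : Set C), S.Nonempty →
    conj c (sInf S) = ⨅ d ∈ S, conj c d
  atomic_conj : ∀ a b, Atomic a → Atomic b → Atomic (conj a b)
  test_nil : Test nil
  test_nil_le : ∀ t, Test t → nil ≤ t
  test_seq_par_interchange : ∀ t t' c d, Test t → Test t' →
    par (seq t c) (seq t' d) = seq (t ⊔ t') (par c d)
  conj_test_interchange : ∀ t t' c d, Test t → Test t' →
    conj (seq t c) (seq t' d) = seq (t ⊔ t') (conj c d)

namespace CRA

variable {C : Type*} [CompleteDistribLattice C] (A : CRA C)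

/-- possibly infinite iteration `c^ω = μ x. nil ⊓ c;x` -/
def omega (c : C) : C :=
  OrderHom.lfp ⟨fun x => A.nil ⊓ A.seq c x,
    fun _ _ h => inf_le_inf_left _ (A.seq_mono_right c h)⟩

/-- finite iteration `c^* = ν x. nil ⊓ c;x` -/
def star (c : C) : C :=
  OrderHom.gfp ⟨fun x => A.nil ⊓ A.seq c x,
    fun _ _ h => inf_le_inf_left _ (A.seq_mono_right c h)⟩

/-- infinite iteration `c^∞ = c^ω ; ⊤` -/
def inft (c : C) : C := A.seq (A.omega c) ⊤

/-- finite powers: `c^0 = nil`, `c^(i+1) = c ; c^i` -/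
def pow (c : C) : ℕ → C
  | 0 => A.nil
  | n + 1 => A.seq c (pow c n)

end CRA

theorem seq_omega_seq {C : Type*} [CompleteDistribLattice C] (A : CRA C)
    (hconj : ∀ (c : C) (S : Set C), S.Nonempty → A.seq c (sInf S) = ⨅ d ∈ S, A.seq c d) (c d : C) :
    A.seq c (A.seq (A.omega c) d) = A.seq c (A.seq (A.star c) d) ⊓ A.inft c := by
  -- binary conjunctivity
  have hconj2 : ∀ x y : C, A.seq c (x ⊓ y) = A.seq c x ⊓ A.seq c y := by
    intro x y
    have h := hconj c {x, y} (by simp)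
    rw [sInf_pair, iInf_pair] at h
    exact h
  -- binary right distributivity
  have hdist2 : ∀ x y e : C, A.seq (x ⊓ y) e = A.seq x e ⊓ A.seq y e := by
    intro x y e
    have h := A.seq_sInf_distrib {x, y} e
    rw [sInf_pair, iInf_pair] at h
    exact h
  set g : C →o C := ⟨fun y => A.seq c y, A.seq_mono_right c⟩ with hg
  set θ : C := OrderHom.lfp g with hθdef
  have hθ : A.seq c θ = θ := OrderHom.map_lfp g
  have hω : A.nil ⊓ A.seq c (A.omega c) = A.omega c := by
    unfold CRA.omega
    exact OrderHom.map_lfp (⟨fun x => A.nil ⊓ A.seq c x,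
      fun _ _ h => inf_le_inf_left _ (A.seq_mono_right c h)⟩ : C →o C)
  have hstar : A.nil ⊓ A.seq c (A.star c) = A.star c := by
    unfold CRA.star
    exact OrderHom.map_gfp (⟨fun x => A.nil ⊓ A.seq c x,
      fun _ _ h => inf_le_inf_left _ (A.seq_mono_right c h)⟩ : C →o C)
  -- θ ; ⊥ = θ
  have hθbot : A.seq θ ⊥ = θ := by
    apply le_antisymm
    · calc A.seq θ ⊥ ≤ A.seq θ A.nil := A.seq_mono_right θ bot_le
        _ = θ := A.seq_nil θ
    · apply OrderHom.lfp_le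
      show A.seq c (A.seq θ ⊥) ≤ A.seq θ ⊥
      rw [← A.seq_assoc, hθ]
  -- θ ; e = θ for all e
  have hθseq : ∀ e : C, A.seq θ e = θ := by
    intro e
    conv_lhs => rw [← hθbot]
    rw [A.seq_assoc, A.bot_seq, hθbot]
  -- ω = star ⊓ θ
  have hωstar : A.omega c = A.star c ⊓ θ := by
    apply le_antisymm
    · unfold CRA.omega
      apply OrderHom.lfp_le
      show A.nil ⊓ A.seq c (A.star c ⊓ θ) ≤ A.star c ⊓ θ
      rw [hconj2, hθ, ← inf_assoc, hstar]
    · have hθle : θ ≤ A.star c ⇨ A.omega c := by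
        apply OrderHom.lfp_le
        show A.seq c (A.star c ⇨ A.omega c) ≤ A.star c ⇨ A.omega c
        rw [le_himp_iff]
        calc A.seq c (A.star c ⇨ A.omega c) ⊓ A.star c
            = A.seq c (A.star c ⇨ A.omega c) ⊓ (A.nil ⊓ A.seq c (A.star c)) := by rw [hstar]
          _ = A.nil ⊓ A.seq c ((A.star c ⇨ A.omega c) ⊓ A.star c) := by
              rw [hconj2]; exact inf_left_comm _ _ _
          _ ≤ A.nil ⊓ A.seq c (A.omega c) :=
              inf_le_inf_left _ (A.seq_mono_right c himp_inf_le)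
          _ = A.omega c := hω
      calc A.star c ⊓ θ ≤ A.star c ⊓ (A.star c ⇨ A.omega c) := inf_le_inf_left _ hθle
        _ = (A.star c ⇨ A.omega c) ⊓ A.star c := inf_comm _ _
        _ ≤ A.omega c := himp_inf_le
  -- star ; ⊤ is a fixed point of g, hence θ ≤ star;⊤
  have hstartop : A.seq c (A.seq (A.star c) ⊤) = A.seq (A.star c) ⊤ := by
    conv_rhs => rw [← hstar]
    rw [hdist2, A.nil_seq, top_inf_eq, A.seq_assoc]
  have hθstar : θ ≤ A.seq (A.star c) ⊤ := OrderHom.lfp_le g (le_of_eq hstartop)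
  -- inft = θ
  have hinft : A.inft c = θ := by
    show A.seq (A.omega c) ⊤ = θ
    rw [hωstar, hdist2, hθseq ⊤]
    exact inf_eq_right.mpr hθstar
  rw [hωstar, hdist2, hθseq d, hconj2, hθ, hinft]
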